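/- Let q be a prime power and a, b ∈ Z_+. There exist coefficients f_i ∈ F_p and positive integers a_i such that S_1(a)·S_1(b) - S_1(a+b) = ∑_i f_i S_1(a_i), and each a_i can be chosen so that a + b - a_i is divisible by q - 1 (the parity/'even' condition). -/

import Mathlib

open Finset


lemma core_sum {F : Type} [Field F] [Fintype F] [DecidableEq F] (k : ℕ) :
    ∑ c ∈ (univ : Finset F).erase 0, (c ^ k)⁻¹ =
      if (Fintype.card F - 1) ∣ k then (-1 : F) else 0 := by
  rw [← FiniteField.sum_pow_units F k]
  rw [← Finset.sum_bij (fun (x : Fˣ) _ => ((x⁻¹ : Fˣ) : F))]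
  · intro x _
    exact Finset.mem_erase.2 ⟨Units.ne_zero _, mem_univ _⟩
  · intro x _ y _ h
    exact inv_injective (Units.ext h)
  · intro c hc
    exact ⟨(Units.mk0 c (Finset.mem_erase.1 hc).1)⁻¹, mem_univ _, by simp⟩
  · intro x _
    rw [← Units.val_pow_eq_pow_val, ← Units.val_pow_eq_pow_val, inv_pow,
      ← Units.val_inv_eq_inv_val, inv_inv]

lemma shift_sum₁ {F : Type} [Field F] [Fintype F] [DecidableEq F] (k : ℕ) (x : F) :
    ∑ y ∈ (univ : Finset F).erase x, ((y - x) ^ k)⁻¹ =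
      if (Fintype.card F - 1) ∣ k then (-1 : F) else 0 := by
  rw [← core_sum k]
  apply Finset.sum_nbij' (fun y => y - x) (fun c => c + x)
  · intro y hy
    simpa [sub_eq_zero] using (Finset.mem_erase.1 hy).1
  · intro c hc
    simpa [eq_comm] using (Finset.mem_erase.1 hc).1
  · intro y _; ring
  · intro c _; ring
  · intro y _; rfl

lemma shift_sum₂ {F : Type} [Field F] [Fintype F] [DecidableEq F] (k : ℕ) (x : F) :
    ∑ y ∈ (univ : Finset F).erase x, ((x - y) ^ k)⁻¹ =
      if (Fintype.card F - 1) ∣ k then (-1 : F) else 0 := by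
  rw [← core_sum k]
  apply Finset.sum_nbij' (fun y => x - y) (fun c => x - c)
  · intro y hy
    simpa [sub_eq_zero, eq_comm] using (Finset.mem_erase.1 hy).1
  · intro c hc
    simpa [sub_eq_self] using (Finset.mem_erase.1 hc).1
  · intro y _; ring
  · intro c _; ring
  · intro y _; rfl

lemma XC_ne_zero {F : Type} [Field F] (θ : F) : (RatFunc.X + RatFunc.C θ) ≠ 0 := by
  rw [← RatFunc.algebraMap_X, ← RatFunc.algebraMap_C, ← map_add]
  exact RatFunc.algebraMap_ne_zero (Polynomial.X_add_C_ne_zero θ)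

lemma pf_step {K : Type} [Field K] {u v c : K} (hu : u ≠ 0) (hv : v ≠ 0) (hc : c ≠ 0)
    (hcv : v - u = c) (k a b : ℕ) :
    (c ^ k)⁻¹ * (u ^ (a+1) * v ^ (b+1))⁻¹ =
      (c ^ (k+1))⁻¹ * (u ^ (a+1) * v ^ b)⁻¹ - (c ^ (k+1))⁻¹ * (u ^ a * v ^ (b+1))⁻¹ := by
  have h1 : (u ^ (a+1) * v ^ b)⁻¹ = v * (u ^ (a+1) * v ^ (b+1))⁻¹ := by
    rw [mul_inv, mul_inv, pow_succ v b, mul_inv]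
    field_simp
  have h2 : (u ^ a * v ^ (b+1))⁻¹ = u * (u ^ (a+1) * v ^ (b+1))⁻¹ := by
    rw [mul_inv, mul_inv, pow_succ u a, mul_inv]
    field_simp
  have hcc : (c ^ (k+1))⁻¹ * c = (c ^ k)⁻¹ := by
    rw [pow_succ, mul_inv, mul_assoc, inv_mul_cancel₀ hc, mul_one]
  rw [h1, h2]
  linear_combination (-(((c^(k+1))⁻¹) * (u^(a+1)*v^(b+1))⁻¹)) * hcv
    - ((u^(a+1)*v^(b+1))⁻¹) * hcc

lemma sum_erase_comm {F M : Type} [Fintype F] [DecidableEq F] [AddCommGroup M]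
    (f : F → F → M) :
    ∑ θ : F, ∑ η ∈ univ.erase θ, f θ η = ∑ η : F, ∑ θ ∈ univ.erase η, f θ η := by
  simp only [Finset.sum_erase_eq_sub (mem_univ _)]
  rw [Finset.sum_sub_distrib, Finset.sum_sub_distrib, Finset.sum_comm]

lemma card_sub_cast {F : Type} [Field F] [Fintype F] :
    ((Fintype.card F : ℤ) - 1) = ((Fintype.card F - 1 : ℕ) : ℤ) := by
  have : 1 ≤ Fintype.card F := Fintype.card_pos
  omega

lemma key (p : ℕ) {F : Type} [Field F] [Fintype F] [DecidableEq F] [CharP F p]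
    (n k a b : ℕ) (hn : a + b = n) (hab : 1 ≤ n) :
    ∃ (m : ℕ) (f : Fin m → ZMod p) (A : Fin m → ℕ),
      (∀ i, 1 ≤ A i) ∧
      (∀ i, ((Fintype.card F : ℤ) - 1) ∣ ((a : ℤ) + b + k - A i)) ∧
      ∑ θ : F, ∑ η ∈ univ.erase θ,
          ((RatFunc.C (η - θ)) ^ k)⁻¹ *
            ((RatFunc.X + RatFunc.C θ) ^ a * (RatFunc.X + RatFunc.C η) ^ b)⁻¹ =
        ∑ i, algebraMap F (RatFunc F) (ZMod.castHom (dvd_refl p) F (f i)) *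
          (∑ θ : F, ((RatFunc.X + RatFunc.C θ) ^ (A i))⁻¹) := by
  induction n using Nat.strong_induction_on generalizing k a b with
  | _ n IH =>
  match b, a with
  | 0, a =>
    -- leaf : b = 0, a = n ≥ 1
    have ha : 1 ≤ a := by omega
    have lhs_eq : ∑ θ : F, ∑ η ∈ univ.erase θ,
        ((RatFunc.C (η - θ)) ^ k)⁻¹ *
          ((RatFunc.X + RatFunc.C θ) ^ a * (RatFunc.X + RatFunc.C η) ^ 0)⁻¹ =
        RatFunc.C (if (Fintype.card F - 1) ∣ k then (-1 : F) else 0) *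
          ∑ θ : F, ((RatFunc.X + RatFunc.C θ) ^ a)⁻¹ := by
      rw [Finset.mul_sum]
      apply Finset.sum_congr rfl
      intro θ _
      simp only [pow_zero, mul_one]
      rw [← Finset.sum_mul]
      congr 1
      rw [← shift_sum₁ k θ, map_sum]
      apply Finset.sum_congr rfl
      intro η _
      rw [map_inv₀, map_pow]
    by_cases hd : (Fintype.card F - 1) ∣ k
    · refine ⟨1, fun _ => -1, fun _ => a, fun _ => ha, ?_, ?_⟩
      · intro _
        rw [card_sub_cast]
        convert Int.natCast_dvd_natCast.2 hd using 1
        push_cast; ring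
      · rw [lhs_eq, if_pos hd]
        simp [map_neg]
    · refine ⟨0, Fin.elim0, Fin.elim0, fun i => i.elim0, fun i => i.elim0, ?_⟩
      rw [lhs_eq, if_neg hd]
      simp
  | b + 1, 0 =>
    -- leaf : a = 0, b ≥ 1
    have lhs_eq : ∑ θ : F, ∑ η ∈ univ.erase θ,
        ((RatFunc.C (η - θ)) ^ k)⁻¹ *
          ((RatFunc.X + RatFunc.C θ) ^ 0 * (RatFunc.X + RatFunc.C η) ^ (b+1))⁻¹ =
        RatFunc.C (if (Fintype.card F - 1) ∣ k then (-1 : F) else 0) *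
          ∑ η : F, ((RatFunc.X + RatFunc.C η) ^ (b+1))⁻¹ := by
      rw [sum_erase_comm, Finset.mul_sum]
      apply Finset.sum_congr rfl
      intro η _
      simp only [pow_zero, one_mul]
      rw [← Finset.sum_mul]
      congr 1
      rw [← shift_sum₂ k η, map_sum]
      apply Finset.sum_congr rfl
      intro θ _
      rw [map_inv₀, map_pow]
    by_cases hd : (Fintype.card F - 1) ∣ k
    · refine ⟨1, fun _ => -1, fun _ => b + 1, fun _ => Nat.le_add_left 1 b, ?_, ?_⟩
      · intro _
        rw [card_sub_cast]
        convert Int.natCast_dvd_natCast.2 hd using 1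
        push_cast; ring
      · rw [lhs_eq, if_pos hd]
        simp [map_neg]
    · refine ⟨0, Fin.elim0, Fin.elim0, fun i => i.elim0, fun i => i.elim0, ?_⟩
      rw [lhs_eq, if_neg hd]
      simp
  | b + 1, a + 1 =>
    -- recursive case
    have hCne : ∀ {θ η : F}, η ≠ θ → RatFunc.C (η - θ) ≠ 0 := by
      intro θ η hne
      rw [← RatFunc.algebraMap_C]
      exact RatFunc.algebraMap_ne_zero
        (by simpa [Polynomial.C_eq_zero, sub_eq_zero] using hne)
    have point : ∀ θ η : F, η ∈ univ.erase θ →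
        ((RatFunc.C (η - θ)) ^ k)⁻¹ *
            ((RatFunc.X + RatFunc.C θ) ^ (a+1) * (RatFunc.X + RatFunc.C η) ^ (b+1))⁻¹ =
          ((RatFunc.C (η - θ)) ^ (k+1))⁻¹ *
              ((RatFunc.X + RatFunc.C θ) ^ (a+1) * (RatFunc.X + RatFunc.C η) ^ b)⁻¹ -
            ((RatFunc.C (η - θ)) ^ (k+1))⁻¹ *
              ((RatFunc.X + RatFunc.C θ) ^ a * (RatFunc.X + RatFunc.C η) ^ (b+1))⁻¹ := by
      intro θ η hη
      have hne : η ≠ θ := (Finset.mem_erase.1 hη).1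
      exact pf_step (XC_ne_zero θ) (XC_ne_zero η) (hCne hne) (by rw [map_sub RatFunc.C]; ring) k a b
    obtain ⟨m₁, f₁, A₁, c11, c12, e1⟩ :=
      IH (n-1) (by omega) (k+1) (a+1) b (by omega) (by omega)
    obtain ⟨m₂, f₂, A₂, c21, c22, e2⟩ :=
      IH (n-1) (by omega) (k+1) a (b+1) (by omega) (by omega)
    refine ⟨m₁ + m₂, Fin.addCases f₁ (fun i => -(f₂ i)), Fin.addCases A₁ A₂, ?_, ?_, ?_⟩
    · intro i
      refine Fin.addCases (fun j => ?_) (fun j => ?_) i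
      · simpa using c11 j
      · simpa using c21 j
    · intro i
      refine Fin.addCases (fun j => ?_) (fun j => ?_) i
      · simp only [Fin.addCases_left]
        convert c12 j using 1
        push_cast; ring
      · simp only [Fin.addCases_right]
        convert c22 j using 1
        push_cast; ring
    · rw [Finset.sum_congr rfl (fun θ _ => Finset.sum_congr rfl (point θ))]
      simp only [Finset.sum_sub_distrib]
      rw [e1, e2, Fin.sum_univ_add]
      simp only [Fin.addCases_left, Fin.addCases_right, map_neg, neg_mul]
      rw [Finset.sum_neg_distrib]
      ring

theorem stmt_7 (p s q : ℕ) (hp : p.Prime) (hs : 0 < s) (hq : q = p ^ s)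
    {F : Type} [Field F] [Fintype F] [CharP F p] (hF : Fintype.card F = q)
    (a b : ℕ) (ha : 1 ≤ a) (hb : 1 ≤ b) :
    ∃ (m : ℕ) (f : Fin m → ZMod p) (A : Fin m → ℕ),
      (∀ i, 1 ≤ A i) ∧
      (∀ i, ((q : ℤ) - 1) ∣ ((a : ℤ) + b - A i)) ∧
      (∑ θ : F, ((RatFunc.X + RatFunc.C θ) ^ a)⁻¹) *
          (∑ θ : F, ((RatFunc.X + RatFunc.C θ) ^ b)⁻¹) -
          (∑ θ : F, ((RatFunc.X + RatFunc.C θ) ^ (a + b))⁻¹) =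
        ∑ i : Fin m,
          algebraMap F (RatFunc F) (ZMod.castHom (dvd_refl p) F (f i)) *
            (∑ θ : F, ((RatFunc.X + RatFunc.C θ) ^ (A i))⁻¹) := by
  classical
  obtain ⟨m, f, A, h1, h2, h3⟩ := key p (F := F) (a + b) 0 a b rfl (le_trans ha (Nat.le_add_right a b))
  refine ⟨m, f, A, h1, fun i => by simpa [hF] using h2 i, ?_⟩
  rw [← h3]
  rw [Finset.sum_mul_sum]
  have split : ∀ θ : F,
      ∑ η : F, ((RatFunc.X + RatFunc.C θ) ^ a)⁻¹ * ((RatFunc.X + RatFunc.C η) ^ b)⁻¹ =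
        (∑ η ∈ univ.erase θ,
          ((RatFunc.C (η - θ)) ^ 0)⁻¹ *
            ((RatFunc.X + RatFunc.C θ) ^ a * (RatFunc.X + RatFunc.C η) ^ b)⁻¹) +
          ((RatFunc.X + RatFunc.C θ) ^ (a + b))⁻¹ := by
    intro θ
    rw [← Finset.sum_erase_add _ _ (mem_univ θ)]
    congr 1
    · apply Finset.sum_congr rfl
      intro η _
      rw [pow_zero, inv_one, one_mul, mul_inv]
    · rw [← mul_inv, ← pow_add]
  simp only [split]
  rw [Finset.sum_add_distrib]
  ring
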